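/- Let V, L ∈ ℝ^{d×k} be matrices whose columns are the initial and limit perturbation responses of linear drifts f_{q_i}(x) = A x + b + c_{q_i}, i.e., the i-th column of V is b + c_{q_i} and the i-th column of L is the fixed point of f_{q_i}, with A invertible. If L has full row rank (rank d), then -V L⁺ = A, where L⁺ is the Moore–Penrose pseudoinverse of L. -/
import Mathlib


open Matrix

/-- The four Penrose conditions characterizing the Moore–Penrose pseudoinverse. -/
def IsMoorePenroseInv {d k : ℕ} (L : Matrix (Fin d) (Fin k) ℝ)
    (Lp : Matrix (Fin k) (Fin d) ℝ) : Prop :=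
  L * Lp * L = L ∧ Lp * L * Lp = Lp ∧ (L * Lp)ᵀ = L * Lp ∧ (Lp * L)ᵀ = Lp * L

/-- If the columns of `V` are the initial perturbation responses `b + c_i`
and the columns of `L` are the limit perturbation responses (fixed points
`-A⁻¹(b + c_i)`) of the linear drifts `f_{q_i}(x) = A x + b + c_{q_i}` with `A`
invertible, and `L` has full row rank `d`, then `-V L⁺ = A`. -/
theorem stmt_2 {d k : ℕ} (A : Matrix (Fin d) (Fin d) ℝ) (b : Fin d → ℝ)
    (c : Fin k → (Fin d → ℝ))
    (V L : Matrix (Fin d) (Fin k) ℝ) (Lp : Matrix (Fin k) (Fin d) ℝ)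
    (hA : IsUnit A.det)
    (hV : ∀ r i, V r i = (b + c i) r)
    (hL : ∀ r i, L r i = (-(A⁻¹.mulVec (b + c i))) r)
    (hLp : IsMoorePenroseInv L Lp)
    (hrank : L.rank = d) :
    -V * Lp = A := by
  -- Step 1: V = -(A * L)
  have hVL : V = -(A * L) := by
    ext r i
    have : (A * L) r i = A.mulVec (fun s => L s i) r := by
      simp [Matrix.mul_apply, Matrix.mulVec, dotProduct]
    rw [hV, Matrix.neg_apply, this]
    have hcol : (fun s => L s i) = -(A⁻¹.mulVec (b + c i)) := by
      funext s; exact hL s i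
    rw [hcol]
    have : A.mulVec (-(A⁻¹.mulVec (b + c i))) = -(A.mulVec (A⁻¹.mulVec (b + c i))) := by
      simp [Matrix.mulVec_neg]
    rw [this, Matrix.mulVec_mulVec, Matrix.mul_nonsing_inv A hA, Matrix.one_mulVec]
    simp
  -- Step 2: L * Lp = 1
  have hsurj : Function.Surjective L.mulVecLin := by
    rw [← LinearMap.range_eq_top]
    apply Submodule.eq_top_of_finrank_eq
    rw [← Matrix.rank, hrank]
    simp [Module.finrank_pi]
  have hLLp : L * Lp = 1 := by
    have h0 : (L * Lp - 1) * L = 0 := by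
      rw [Matrix.sub_mul, hLp.1, Matrix.one_mul, sub_self]
    have key : ∀ v, (L * Lp - 1).mulVec v = 0 := by
      intro v
      obtain ⟨w, hw⟩ := hsurj v
      have : (L * Lp - 1).mulVec (L.mulVec w) = ((L * Lp - 1) * L).mulVec w := by
        rw [Matrix.mulVec_mulVec]
      rw [← hw]
      simp only [Matrix.mulVecLin_apply] at *
      rw [this, h0, Matrix.zero_mulVec]
    have h1 : L * Lp - 1 = 0 := by
      ext r s
      have := congrFun (key (Pi.single s 1)) r
      simpa [Matrix.mulVec_single] using this
    exact sub_eq_zero.mp h1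
  rw [hVL, neg_neg, Matrix.mul_assoc, hLLp, Matrix.mul_one]
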